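/- A set A ⊆ ℕ is an IP-set (contains FS((n_k)) = {n_{k₁} + ⋯ + n_{k_l} : k₁ < ⋯ < k_l} for some strictly increasing sequence (n_k)) if and only if A belongs to some non-principal idempotent ultrafilter p = p + p on ℕ. -/

import Mathlib

/-- The shift `A - n = {k : k + n ∈ A}`. -/
def shiftSet (A : Set ℕ) (n : ℕ) : Set ℕ := {k | k + n ∈ A}

/-- The set of finite sums of a sequence `f`. -/
def FSset (f : ℕ → ℕ) : Set ℕ :=
  {n | ∃ F : Finset ℕ, F.Nonempty ∧ n = ∑ k ∈ F, f k}

attribute [local instance] Ultrafilter.add Ultrafilter.addSemigroup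

/-- every element of an FS-set of a positive sequence is positive -/
lemma FSset_pos {f : ℕ → ℕ} (hf : ∀ k, 1 ≤ f k) {n : ℕ} (hn : n ∈ FSset f) : 1 ≤ n := by
  obtain ⟨F, ⟨k, hk⟩, rfl⟩ := hn
  calc 1 ≤ f k := hf k
    _ ≤ ∑ k ∈ F, f k := Finset.single_le_sum (fun _ _ => Nat.zero_le _) hk

/-- elements of Hindman's `FS` are finite sums over nonempty finsets -/
lemma FS_mem (a : Stream' ℕ) {m : ℕ} (hm : m ∈ Hindman.FS a) :
    ∃ F : Finset ℕ, F.Nonempty ∧ m = ∑ k ∈ F, a.get k := by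
  induction hm with
  | head' a => exact ⟨{0}, Finset.singleton_nonempty 0, by simp [Stream'.head]⟩
  | tail' a m h ih =>
    obtain ⟨F, hF, rfl⟩ := ih
    refine ⟨F.image (· + 1), hF.image _, ?_⟩
    rw [Finset.sum_image (fun x _ y _ h => by omega)]
    rfl
  | cons' a m h ih =>
    obtain ⟨F, hF, rfl⟩ := ih
    refine ⟨insert 0 (F.image (· + 1)), Finset.insert_nonempty _ _, ?_⟩
    rw [Finset.sum_insert (by simp), Finset.sum_image (fun x _ y _ h => by omega)]
    rfl

/-- A set is an IP-set (contains a set of finite sums of a strictly increasing sequence)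
iff it belongs to some non-principal idempotent ultrafilter. -/
theorem ip_set_iff_nonprincipal_idempotent (A : Set ℕ)
    (add : Ultrafilter ℕ → Ultrafilter ℕ → Ultrafilter ℕ)
    (hadd : ∀ (B : Set ℕ) (q p : Ultrafilter ℕ),
      B ∈ add q p ↔ {n | shiftSet B n ∈ p} ∈ q) :
    (∃ f : ℕ → ℕ, StrictMono f ∧ FSset f ⊆ A) ↔
    ∃ p : Ultrafilter ℕ, add p p = p ∧ (∀ n : ℕ, p ≠ (pure n : Ultrafilter ℕ)) ∧ A ∈ p := by
  -- `add` agrees with Mathlib's ultrafilter addition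
  have haddeq : ∀ q p : Ultrafilter ℕ, add q p = q + p := by
    intro q p
    apply Ultrafilter.coe_injective
    apply Filter.ext
    intro B
    rw [Ultrafilter.mem_coe, Ultrafilter.mem_coe, hadd]
    have h2 : (B ∈ q + p) ↔ ∀ᶠ n in q, ∀ᶠ k in p, n + k ∈ B :=
      Ultrafilter.eventually_add q p (· ∈ B)
    rw [h2]
    have : ∀ n, shiftSet B n = {k | n + k ∈ B} := by
      intro n; ext k; simp [shiftSet, Nat.add_comm]
    simp only [this]
    rfl
  constructor
  · rintro ⟨f, hf, hfA⟩
    -- pass to the tail so all values are positive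
    set g : Stream' ℕ := fun k => f (k + 1) with hg
    have hg1 : ∀ k, 1 ≤ g k := fun k =>
      Nat.lt_of_le_of_lt (Nat.zero_le (f 0)) (hf (Nat.succ_pos k))
    have hgFS : ∀ {m : ℕ}, m ∈ Hindman.FS g → m ∈ FSset g := by
      intro m hm
      obtain ⟨F, hF, rfl⟩ := FS_mem g hm
      exact ⟨F, hF, rfl⟩
    have hgA : FSset g ⊆ A := by
      rintro n ⟨F, hF, rfl⟩
      apply hfA
      refine ⟨F.image (· + 1), hF.image _, ?_⟩
      rw [Finset.sum_image (fun x _ y _ h => by omega)]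
    obtain ⟨U, hU, hUFS⟩ := Hindman.exists_idempotent_ultrafilter_le_FS g
    refine ⟨U, by rw [haddeq]; exact hU, ?_, ?_⟩
    · intro n hn
      -- idempotent principal ultrafilter must be `pure 0`
      have hpp : (pure (n + n) : Ultrafilter ℕ) = pure n := by
        rw [← hn]
        rw [← hU, hn]
        apply Ultrafilter.coe_injective
        apply Filter.ext
        intro s
        rw [Ultrafilter.mem_coe, Ultrafilter.mem_coe,
          show (s ∈ (pure n : Ultrafilter ℕ) + pure n) ↔ _ from
            Ultrafilter.eventually_add _ _ (· ∈ s)]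
        simp
      have hnn : n + n = n := by
        have := congrArg (fun u : Ultrafilter ℕ => ({n + n} : Set ℕ) ∈ u) hpp
        simp at this
        omega
      have hn0 : n = 0 := by omega
      -- but 0 is not a finite sum of positive numbers
      have h0FS : (0 : ℕ) ∈ Hindman.FS g := by
        have : {m | m ∈ Hindman.FS g} ∈ U := hUFS
        rw [hn, hn0] at this
        exact this
      have := FSset_pos hg1 (hgFS h0FS)
      omega
    · exact Filter.mem_of_superset hUFS (fun m hm => hgA (hgFS hm))
  · rintro ⟨p, hidem, hnp, hA⟩
    have hidem' : p + p = p := by rw [← haddeq]; exact hidem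
    have h0 : ({0} : Set ℕ) ∉ p := by
      intro h
      obtain ⟨x, _, hp⟩ := Ultrafilter.eq_pure_of_finite_mem (Set.finite_singleton 0) h
      exact hnp x hp
    have hA' : (A \ {0} : Set ℕ) ∈ p := by
      rw [Set.diff_eq]
      exact Filter.inter_mem hA ((Ultrafilter.compl_mem_iff_notMem).2 h0)
    obtain ⟨a, ha⟩ := Hindman.exists_FS_of_large p hidem' _ hA'
    have hpos : ∀ i, 1 ≤ a.get i := by
      intro i
      have := ha (Hindman.FS.singleton a i)
      simp [Set.mem_diff] at this
      omega
    -- block endpoints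
    set h : ℕ → ℕ := fun n =>
      Nat.rec 0 (fun _ hn => hn + 1 + ∑ i ∈ Finset.range hn, a.get i) n with hh
    have hhsucc : ∀ n, h (n + 1) = h n + 1 + ∑ i ∈ Finset.range (h n), a.get i :=
      fun n => rfl
    have hhmono : StrictMono h := by
      apply strictMono_nat_of_lt_succ
      intro n
      rw [hhsucc]
      omega
    set f : ℕ → ℕ := fun n => ∑ i ∈ Finset.Ico (h n) (h (n + 1)), a.get i with hfdef
    have hcard_le : ∀ n, h (n + 1) - h n ≤ f n := by
      intro n
      calc h (n + 1) - h n = (Finset.Ico (h n) (h (n + 1))).card * 1 := by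
            rw [Nat.card_Ico]; omega
        _ ≤ ∑ i ∈ Finset.Ico (h n) (h (n + 1)), a.get i :=
            Finset.card_nsmul_le_sum _ _ 1 (fun i _ => hpos i)
    have hfmono : StrictMono f := by
      apply strictMono_nat_of_lt_succ
      intro n
      have h1 : f n ≤ ∑ i ∈ Finset.range (h (n + 1)), a.get i := by
        apply Finset.sum_le_sum_of_subset
        intro i hi
        simp only [Finset.mem_Ico] at hi
        simp only [Finset.mem_range]
        omega
      have h2 := hcard_le (n + 1)
      rw [hhsucc (n + 1)] at h2
      omega
    refine ⟨f, hfmono, ?_⟩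
    rintro n ⟨F, hF, rfl⟩
    have hdisj : (F : Set ℕ).PairwiseDisjoint
        (fun k => Finset.Ico (h k) (h (k + 1))) := by
      intro k _ l _ hkl
      apply Finset.disjoint_left.2
      intro i hi hi'
      simp only [Finset.mem_Ico] at hi hi'
      rcases Nat.lt_or_ge k l with hlt | hge
      · have := hhmono.monotone (show k + 1 ≤ l by omega)
        omega
      · have hlt : l < k := by omega
        have := hhmono.monotone (show l + 1 ≤ k by omega)
        omega
    have hsum : ∑ k ∈ F, f k
        = ∑ i ∈ F.biUnion (fun k => Finset.Ico (h k) (h (k + 1))), a.get i :=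
      (Finset.sum_biUnion hdisj).symm
    have hne : (F.biUnion (fun k => Finset.Ico (h k) (h (k + 1)))).Nonempty := by
      obtain ⟨k, hk⟩ := hF
      refine ⟨h k, Finset.mem_biUnion.2 ⟨k, hk, ?_⟩⟩
      simp only [Finset.mem_Ico]
      exact ⟨le_refl _, hhmono (Nat.lt_succ_self k)⟩
    rw [hsum]
    exact (ha (Hindman.FS.finset_sum a _ hne)).1
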